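/- Let A and B be maximal monotone operators on a real Hilbert space H and σ > 0. Define the operator 𝒜 on H² by 𝒜(x,y) = (σA x + y) × (−x + (σB)⁻¹ y) and M(x,y) = (x−y, −x+y). Suppose A is μ-strongly monotone and B is 1/β-cocoercive. Then for all (u,ξ), (u',ξ') in the graph of 𝒜 with ξ, ξ' ∈ Im M, one has ⟨ξ−ξ', u−u'⟩ ≥ α‖u−u'‖_M² with α = min{σμ/2, 1/(2σβ)}. -/

import Mathlib

/-- DRS strong monotonicity estimate (case 1): if `A` is `μ`-strongly monotone and `B` is
`1/β`-cocoercive, then on the graph of `𝒜` restricted to outputs in `Im M` one has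
`⟨ξ−ξ', u−u'⟩ ≥ α ‖u−u'‖_M²` with `α = min {σμ/2, 1/(2σβ)}`. -/
theorem stmt17 {H : Type} [NormedAddCommGroup H] [InnerProductSpace ℝ H] [CompleteSpace H]
    (A B : Set (H × H)) (σ μ β : ℝ) (hσ : 0 < σ) (hμ : 0 < μ) (hβ : 0 < β)
    -- `A`, `B` maximal monotone
    (hAmono : ∀ p ∈ A, ∀ q ∈ A, 0 ≤ (inner ℝ (p.2 - q.2) (p.1 - q.1) : ℝ))
    (hAmax : ∀ p : H × H, (∀ q ∈ A, 0 ≤ (inner ℝ (p.2 - q.2) (p.1 - q.1) : ℝ)) → p ∈ A)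
    (hBmono : ∀ p ∈ B, ∀ q ∈ B, 0 ≤ (inner ℝ (p.2 - q.2) (p.1 - q.1) : ℝ))
    (hBmax : ∀ p : H × H, (∀ q ∈ B, 0 ≤ (inner ℝ (p.2 - q.2) (p.1 - q.1) : ℝ)) → p ∈ B)
    -- `A` `μ`-strongly monotone
    (hAstrong : ∀ p ∈ A, ∀ q ∈ A,
        μ * ‖p.1 - q.1‖ ^ 2 ≤ (inner ℝ (p.2 - q.2) (p.1 - q.1) : ℝ))
    -- `B` `1/β`-cocoercive
    (hBcoco : ∀ p ∈ B, ∀ q ∈ B,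
        (1 / β) * ‖p.2 - q.2‖ ^ 2 ≤ (inner ℝ (p.2 - q.2) (p.1 - q.1) : ℝ)) :
    ∀ x y ξ₁ ξ₂ x' y' ξ₁' ξ₂' a b a' b' : H,
      -- `(u, ξ) ∈ 𝒜` with `ξ ∈ Im M`
      (x, a) ∈ A → (b, σ⁻¹ • y) ∈ B → ξ₁ = σ • a + y → ξ₂ = -x + b → ξ₂ = -ξ₁ →
      (x', a') ∈ A → (b', σ⁻¹ • y') ∈ B → ξ₁' = σ • a' + y' → ξ₂' = -x' + b' → ξ₂' = -ξ₁' →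
      min (σ * μ / 2) (1 / (2 * σ * β)) * ‖(x - y) - (x' - y')‖ ^ 2
        ≤ (inner ℝ (ξ₁ - ξ₁') (x - x') : ℝ) + (inner ℝ (ξ₂ - ξ₂') (y - y') : ℝ) := by
  intro x y ξ₁ ξ₂ x' y' ξ₁' ξ₂' a b a' b' hA hB h1 h2 h3 hA' hB' h1' h2' h3'
  subst h1 h2 h1' h2'
  have hAs := hAstrong _ hA _ hA'
  have hBc := hBcoco _ hB _ hB'
  simp only at hAs hBc
  -- b - b' in terms of the rest
  have hb : b = x - σ • a - y := by
    have h := h3; rw [neg_add] at h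
    have : b = x + (-(σ • a) + -y) := by
      have := congrArg (fun z => x + z) h.symm
      simpa [add_comm, add_left_comm, add_assoc] using this.symm
    rw [this]; abel
  have hb' : b' = x' - σ • a' - y' := by
    have h := h3'; rw [neg_add] at h
    have : b' = x' + (-(σ • a') + -y') := by
      have := congrArg (fun z => x' + z) h.symm
      simpa [add_comm, add_left_comm, add_assoc] using this.symm
    rw [this]; abel
  subst hb hb'
  rw [h3, h3']
  -- scalar abbreviations
  have hσ' : σ ≠ 0 := ne_of_gt hσ
  set P := x - x' with hP
  set Q := y - y' with hQ
  set D := a - a' with hD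
  have key1 : μ * ‖P‖ ^ 2 ≤ inner ℝ D P := hAs
  have hsm : σ⁻¹ • y - σ⁻¹ • y' = σ⁻¹ • Q := by rw [← smul_sub]
  have hbb : (x - σ • a - y) - (x' - σ • a' - y') = P - σ • D - Q := by
    rw [hP, hQ, hD, smul_sub]; abel
  rw [hsm, hbb] at hBc
  have hn : ‖σ⁻¹ • Q‖ ^ 2 = σ⁻¹ ^ 2 * ‖Q‖ ^ 2 := by
    rw [norm_smul]; simp [abs_of_pos hσ, mul_pow]
  rw [hn, real_inner_smul_left] at hBc
  have hinv : σ * σ⁻¹ = 1 := mul_inv_cancel₀ hσ'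
  have key2 : (1 / (σ * β)) * ‖Q‖ ^ 2 ≤ inner ℝ Q (P - σ • D - Q) := by
    have h2 := mul_le_mul_of_nonneg_left hBc hσ.le
    have e : σ * (σ⁻¹ * inner ℝ Q (P - σ • D - Q)) = inner ℝ Q (P - σ • D - Q) := by
      rw [← mul_assoc, hinv, one_mul]
    rw [e] at h2
    refine le_trans (le_of_eq ?_) h2
    field_simp
  have expand2 : (inner ℝ Q (P - σ • D - Q) : ℝ)
      = inner ℝ Q P - σ * inner ℝ Q D - inner ℝ Q Q := by
    rw [inner_sub_right, inner_sub_right, real_inner_smul_right]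
  rw [expand2] at key2
  -- expand the goal
  have lhs_eq : ((σ • a + y) - (σ • a' + y')) = σ • D + Q := by
    rw [hD, hQ, smul_sub]; abel
  rw [lhs_eq]
  have exy : (x - y) - (x' - y') = P - Q := by rw [hP, hQ]; abel
  rw [exy]
  have e1 : (inner ℝ (σ • D + Q) P : ℝ) = σ * inner ℝ D P + inner ℝ Q P := by
    rw [inner_add_left, real_inner_smul_left]
  have e2 : (inner ℝ (-(σ • D + Q)) Q : ℝ) = -(σ * inner ℝ D Q + inner ℝ Q Q) := by
    rw [inner_neg_left, inner_add_left, real_inner_smul_left]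
  have lhs_eq2 : -(σ • a + y) - -(σ • a' + y') = -(σ • D + Q) := by
    rw [hD, hQ, smul_sub]; abel
  rw [e1, lhs_eq2, e2]
  have hnPQ : ‖P - Q‖ ^ 2 = ‖P‖ ^ 2 - 2 * inner ℝ P Q + ‖Q‖ ^ 2 := by
    rw [← real_inner_self_eq_norm_sq, ← real_inner_self_eq_norm_sq,
      ← real_inner_self_eq_norm_sq, inner_sub_sub_self, real_inner_comm Q P]
    ring
  have hnPQ2 : (0:ℝ) ≤ ‖P + Q‖ ^ 2 := sq_nonneg _
  have hnPQ3 : ‖P + Q‖ ^ 2 = ‖P‖ ^ 2 + 2 * inner ℝ P Q + ‖Q‖ ^ 2 := by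
    rw [← real_inner_self_eq_norm_sq, ← real_inner_self_eq_norm_sq,
      ← real_inner_self_eq_norm_sq, inner_add_add_self, real_inner_comm Q P]
    ring
  have hsym : (inner ℝ Q P : ℝ) = inner ℝ P Q := real_inner_comm P Q
  have hsym2 : (inner ℝ Q D : ℝ) = inner ℝ D Q := real_inner_comm D Q
  have hQQ : (inner ℝ Q Q : ℝ) = ‖Q‖ ^ 2 := real_inner_self_eq_norm_sq Q
  have hmin1 : min (σ * μ / 2) (1 / (2 * σ * β)) ≤ σ * μ / 2 := min_le_left _ _
  have hmin2 : min (σ * μ / 2) (1 / (2 * σ * β)) ≤ 1 / (2 * σ * β) := min_le_right _ _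
  have hhalf : 1 / (2 * σ * β) = (1 / (σ * β)) / 2 := by ring
  nlinarith [sq_nonneg ‖P‖, sq_nonneg ‖Q‖, key1, key2, mul_pos hσ hμ,
    mul_pos hσ hβ, le_min (by positivity : (0:ℝ) ≤ σ * μ / 2)
      (by positivity : (0:ℝ) ≤ 1 / (2 * σ * β))]
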